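/- Consider distributed softmax regression where each regular worker w ∈ R has local cost f_w as in the standard cross-entropy form and poisoned workers have costs f̃_w with arbitrarily relabeled samples. If all features a^{(w,j)} are entry-wise non-negative, then for all x, max over poisoned workers w of ‖∇f̃_w(x) − ∇f(x)‖ ≤ 2√K · max over all workers w of ‖(1/J)Σ_{j=1}^J a^{(w,j)}‖, where f = (1/R)Σ_{w∈R} f_w. -/

import Mathlib

/-- The per-sample softmax (cross-entropy) loss. -/
noncomputable def softmaxLoss (K d : ℕ) (a : EuclideanSpace ℝ (Fin d)) (b : Fin K)
    (x : EuclideanSpace ℝ (Fin K × Fin d)) : ℝ :=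
  Real.log (∑ l : Fin K, Real.exp (∑ i : Fin d, x (l, i) * a i)) -
    ∑ i : Fin d, x (b, i) * a i

/-- The local cost of a worker with `J` samples `(a j, b j)`. -/
noncomputable def localCost (K d J : ℕ) (a : Fin J → EuclideanSpace ℝ (Fin d))
    (b : Fin J → Fin K) (x : EuclideanSpace ℝ (Fin K × Fin d)) : ℝ :=
  (J : ℝ)⁻¹ * ∑ j : Fin J, softmaxLoss K d (a j) (b j) x

noncomputable def smGrad (K d : ℕ) (a : EuclideanSpace ℝ (Fin d)) (b : Fin K)
    (x : EuclideanSpace ℝ (Fin K × Fin d)) : EuclideanSpace ℝ (Fin K × Fin d) :=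
  WithLp.toLp 2 fun p : Fin K × Fin d => (Real.exp (∑ i : Fin d, x (p.1, i) * a i) /
      (∑ l : Fin K, Real.exp (∑ i : Fin d, x (l, i) * a i)) -
    if p.1 = b then 1 else 0) * a p.2

noncomputable def el (K d : ℕ) (a : EuclideanSpace ℝ (Fin d)) (l : Fin K) :
    EuclideanSpace ℝ (Fin K × Fin d) :=
  WithLp.toLp 2 fun p : Fin K × Fin d => if p.1 = l then a p.2 else 0

lemma hasGradientAt_softmaxLoss (K d : ℕ) (a : EuclideanSpace ℝ (Fin d)) (b : Fin K)
    (x : EuclideanSpace ℝ (Fin K × Fin d)) :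
    HasGradientAt (softmaxLoss K d a b) (smGrad K d a b x) x := by
  have hZpos : 0 < ∑ l : Fin K, Real.exp (∑ i : Fin d, x (l, i) * a i) := by
    have : Nonempty (Fin K) := ⟨b⟩
    exact Finset.sum_pos (fun l _ => Real.exp_pos _) Finset.univ_nonempty
  have hlin : ∀ l : Fin K, HasFDerivAt (fun y : EuclideanSpace ℝ (Fin K × Fin d) => ∑ i : Fin d, y (l, i) * a i)
      (innerSL ℝ (el K d a l)) x := by
    intro l
    have heq : (fun y : EuclideanSpace ℝ (Fin K × Fin d) => ∑ i : Fin d, y (l, i) * a i) = fun y => innerSL ℝ (el K d a l) y := by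
      funext y
      simp [innerSL_apply_apply, PiLp.inner_apply, RCLike.inner_apply, el,
        Fintype.sum_prod_type, Finset.sum_ite_eq, mul_comm]
    rw [heq]
    exact (innerSL ℝ (el K d a l)).hasFDerivAt
  have hexp : ∀ l : Fin K, HasFDerivAt (fun y : EuclideanSpace ℝ (Fin K × Fin d) => Real.exp (∑ i : Fin d, y (l, i) * a i))
      (Real.exp (∑ i : Fin d, x (l, i) * a i) • innerSL ℝ (el K d a l)) x := fun l =>
    (Real.hasDerivAt_exp _).comp_hasFDerivAt x (hlin l)
  have hsum : HasFDerivAt (fun y : EuclideanSpace ℝ (Fin K × Fin d) => ∑ l : Fin K, Real.exp (∑ i : Fin d, y (l, i) * a i))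
      (∑ l : Fin K, Real.exp (∑ i : Fin d, x (l, i) * a i) • innerSL ℝ (el K d a l)) x :=
    HasFDerivAt.fun_sum fun l _ => hexp l
  have hlog : HasFDerivAt
      (fun y : EuclideanSpace ℝ (Fin K × Fin d) => Real.log (∑ l : Fin K, Real.exp (∑ i : Fin d, y (l, i) * a i)))
      ((∑ l : Fin K, Real.exp (∑ i : Fin d, x (l, i) * a i))⁻¹ •
        ∑ l : Fin K, Real.exp (∑ i : Fin d, x (l, i) * a i) • innerSL ℝ (el K d a l)) x :=
    hsum.log hZpos.ne'
  have htot := hlog.sub (hlin b)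
  rw [hasGradientAt_iff_hasFDerivAt]
  have hD : (InnerProductSpace.toDual ℝ (EuclideanSpace ℝ (Fin K × Fin d))) (smGrad K d a b x) =
      ((∑ l : Fin K, Real.exp (∑ i : Fin d, x (l, i) * a i))⁻¹ •
        ∑ l : Fin K, Real.exp (∑ i : Fin d, x (l, i) * a i) • innerSL ℝ (el K d a l) -
      innerSL ℝ (el K d a b)) := by
    apply ContinuousLinearMap.ext
    intro v
    simp only [InnerProductSpace.toDual_apply_apply, PiLp.toLp_apply, PiLp.inner_apply, RCLike.inner_apply,
      conj_trivial, ContinuousLinearMap.sub_apply, ContinuousLinearMap.smul_apply,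
      ContinuousLinearMap.sum_apply, innerSL_apply_apply, smGrad, el, smul_eq_mul,
      Fintype.sum_prod_type, ite_mul, one_mul, zero_mul, sub_mul,
      Finset.sum_sub_distrib, Finset.sum_ite_irrel, Finset.sum_const_zero,
      Finset.sum_ite_eq', Finset.mem_univ, if_true, div_eq_inv_mul,
      mul_ite, mul_zero, mul_sub, Finset.sum_ite_eq]
    congr 1
    rw [Finset.mul_sum]
    refine Finset.sum_congr rfl fun l _ => ?_
    simp only [Finset.mul_sum]
    refine Finset.sum_congr rfl fun i _ => by ring
  rw [hD]
  exact htot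

noncomputable def lcGrad (K d J : ℕ) (a : Fin J → EuclideanSpace ℝ (Fin d))
    (b : Fin J → Fin K) (x : EuclideanSpace ℝ (Fin K × Fin d)) :
    EuclideanSpace ℝ (Fin K × Fin d) :=
  (J : ℝ)⁻¹ • ∑ j : Fin J, smGrad K d (a j) (b j) x

lemma hasGradientAt_localCost (K d J : ℕ) (a : Fin J → EuclideanSpace ℝ (Fin d))
    (b : Fin J → Fin K) (x : EuclideanSpace ℝ (Fin K × Fin d)) :
    HasGradientAt (localCost K d J a b) (lcGrad K d J a b x) x := by
  rw [hasGradientAt_iff_hasFDerivAt]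
  have h1 : HasFDerivAt (fun y : EuclideanSpace ℝ (Fin K × Fin d) =>
      ∑ j : Fin J, softmaxLoss K d (a j) (b j) y)
      (∑ j : Fin J, (InnerProductSpace.toDual ℝ (EuclideanSpace ℝ (Fin K × Fin d)))
        (smGrad K d (a j) (b j) x)) x :=
    HasFDerivAt.fun_sum fun j _ => (hasGradientAt_softmaxLoss K d (a j) (b j) x).hasFDerivAt
  have h2 := h1.const_smul ((J : ℝ)⁻¹)
  have hD : (InnerProductSpace.toDual ℝ (EuclideanSpace ℝ (Fin K × Fin d)))
      (lcGrad K d J a b x) = (J : ℝ)⁻¹ •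
      ∑ j : Fin J, (InnerProductSpace.toDual ℝ (EuclideanSpace ℝ (Fin K × Fin d)))
        (smGrad K d (a j) (b j) x) := by
    simp [lcGrad, map_sum, map_smulₛₗ]
  rw [hD]
  have : (fun y : EuclideanSpace ℝ (Fin K × Fin d) => localCost K d J a b y) =
      fun y => (J : ℝ)⁻¹ • ∑ j : Fin J, softmaxLoss K d (a j) (b j) y := by
    funext y; simp [localCost, smul_eq_mul]
  rw [show localCost K d J a b = fun y => (J : ℝ)⁻¹ •
      ∑ j : Fin J, softmaxLoss K d (a j) (b j) y from this]
  exact h2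

lemma sum_apply_E {n : ℕ} {m : Type*} [Fintype m] (f : m → EuclideanSpace ℝ (Fin n))
    (i : Fin n) : (∑ j : m, f j) i = ∑ j : m, f j i := by
  rw [WithLp.ofLp_sum]; exact Finset.sum_apply i Finset.univ _

set_option maxHeartbeats 1000000 in
lemma norm_lcGrad_le (K d J : ℕ) (a : Fin J → EuclideanSpace ℝ (Fin d))
    (b : Fin J → Fin K) (ha : ∀ j i, 0 ≤ a j i) (x : EuclideanSpace ℝ (Fin K × Fin d)) :
    ‖lcGrad K d J a b x‖ ≤ Real.sqrt K * ‖(J : ℝ)⁻¹ • ∑ j : Fin J, a j‖ := by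
  set s : EuclideanSpace ℝ (Fin d) := (J : ℝ)⁻¹ • ∑ j : Fin J, a j with hs
  have hsapp : ∀ i, s i = (J : ℝ)⁻¹ * ∑ j : Fin J, a j i := by
    intro i
    rw [hs, PiLp.smul_apply, smul_eq_mul, sum_apply_E]
  have key : ∀ p : Fin K × Fin d, |lcGrad K d J a b x p| ≤ s p.2 := by
    intro p
    have happ : lcGrad K d J a b x p = (J : ℝ)⁻¹ *
        ∑ j : Fin J, smGrad K d (a j) (b j) x p := by
      rw [lcGrad, PiLp.smul_apply, smul_eq_mul,
        WithLp.ofLp_sum, Finset.sum_apply p Finset.univ (fun j => (smGrad K d (a j) (b j) x).ofLp)]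
    rw [happ, hsapp]
    rw [abs_mul, abs_of_nonneg (by positivity : (0:ℝ) ≤ (J : ℝ)⁻¹)]
    gcongr
    calc |∑ j : Fin J, smGrad K d (a j) (b j) x p| ≤
        ∑ j : Fin J, |smGrad K d (a j) (b j) x p| := Finset.abs_sum_le_sum_abs _ _
      _ ≤ ∑ j : Fin J, a j p.2 := by
        refine Finset.sum_le_sum fun j _ => ?_
        have hZpos : 0 < ∑ l : Fin K, Real.exp (∑ i : Fin d, x (l, i) * (a j) i) := by
          have : Nonempty (Fin K) := ⟨b j⟩
          exact Finset.sum_pos (fun l _ => Real.exp_pos _) Finset.univ_nonempty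
        set q : ℝ := Real.exp (∑ i : Fin d, x (p.1, i) * (a j) i) /
            (∑ l : Fin K, Real.exp (∑ i : Fin d, x (l, i) * (a j) i)) with hq
        have hq0 : 0 ≤ q := div_nonneg (Real.exp_pos _).le hZpos.le
        have hq1 : q ≤ 1 := by
          rw [hq, div_le_one hZpos]
          exact Finset.single_le_sum (f := fun l => Real.exp (∑ i : Fin d, x (l, i) * a j i))
            (fun l _ => (Real.exp_pos _).le) (Finset.mem_univ p.1)
        have habs : |q - (if p.1 = b j then (1:ℝ) else 0)| ≤ 1 := by
          rw [abs_le]; constructor <;> split <;> linarith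
        calc |smGrad K d (a j) (b j) x p| =
            |q - (if p.1 = b j then (1:ℝ) else 0)| * |(a j) p.2| := by
              rw [smGrad, PiLp.toLp_apply, abs_mul]
          _ ≤ 1 * |(a j) p.2| := by gcongr
          _ = (a j) p.2 := by rw [one_mul, abs_of_nonneg (ha j p.2)]
  rw [EuclideanSpace.norm_eq, EuclideanSpace.norm_eq]
  have h1 : ∑ p : Fin K × Fin d, ‖lcGrad K d J a b x p‖ ^ 2 ≤
      (K : ℝ) * ∑ i : Fin d, ‖s i‖ ^ 2 := by
    calc ∑ p : Fin K × Fin d, ‖lcGrad K d J a b x p‖ ^ 2 ≤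
        ∑ p : Fin K × Fin d, ‖s p.2‖ ^ 2 := by
          refine Finset.sum_le_sum fun p _ => ?_
          rw [Real.norm_eq_abs, Real.norm_eq_abs]
          exact pow_le_pow_left₀ (abs_nonneg _) ((key p).trans (le_abs_self _)) 2
      _ = (K : ℝ) * ∑ i : Fin d, ‖s i‖ ^ 2 := by
          simp [Fintype.sum_prod_type, Finset.sum_const, Finset.card_univ, nsmul_eq_mul]
  calc Real.sqrt (∑ p : Fin K × Fin d, ‖lcGrad K d J a b x p‖ ^ 2) ≤
      Real.sqrt ((K : ℝ) * ∑ i : Fin d, ‖s i‖ ^ 2) := Real.sqrt_le_sqrt h1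
    _ = Real.sqrt K * Real.sqrt (∑ i : Fin d, ‖s i‖ ^ 2) := Real.sqrt_mul (by positivity) _

/-- in distributed softmax regression with entry-wise non-negative features,
where regular workers (the set `Reg`) have labels `b` and poisoned workers have arbitrarily
relabeled samples `bt`, every poisoned worker `w ∉ Reg` satisfies, for all `x`,
`‖∇f̃_w(x) − ∇f(x)‖ ≤ 2√K · max_{v ∈ W} ‖(1/J) Σ_j a^{(v,j)}‖`,
where `f = (1/R) Σ_{v ∈ Reg} f_v`. -/
theorem stmt_4 (K d J Wn : ℕ) (hJ : 1 ≤ J)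
    (Reg : Finset (Fin Wn)) (hReg : Reg.Nonempty)
    (a : Fin Wn → Fin J → EuclideanSpace ℝ (Fin d))
    (b : Fin Wn → Fin J → Fin K) (bt : Fin Wn → Fin J → Fin K)
    (ha : ∀ w j i, 0 ≤ a w j i)
    (x : EuclideanSpace ℝ (Fin K × Fin d)) (w : Fin Wn) (hw : w ∉ Reg) :
    ‖gradient (localCost K d J (a w) (bt w)) x -
        gradient (fun z => (Reg.card : ℝ)⁻¹ * ∑ v ∈ Reg, localCost K d J (a v) (b v) z) x‖ ≤
      2 * Real.sqrt K *
        Finset.univ.sup' (⟨w, Finset.mem_univ w⟩ : (Finset.univ : Finset (Fin Wn)).Nonempty)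
          (fun v => ‖(J : ℝ)⁻¹ • ∑ j : Fin J, a v j‖) := by
  have hgrad1 : gradient (localCost K d J (a w) (bt w)) x = lcGrad K d J (a w) (bt w) x :=
    (hasGradientAt_localCost K d J (a w) (bt w) x).gradient
  have hGf : HasGradientAt
      (fun z => (Reg.card : ℝ)⁻¹ * ∑ v ∈ Reg, localCost K d J (a v) (b v) z)
      ((Reg.card : ℝ)⁻¹ • ∑ v ∈ Reg, lcGrad K d J (a v) (b v) x) x := by
    rw [hasGradientAt_iff_hasFDerivAt]
    have h1 : HasFDerivAt (fun z : EuclideanSpace ℝ (Fin K × Fin d) =>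
        ∑ v ∈ Reg, localCost K d J (a v) (b v) z)
        (∑ v ∈ Reg, (InnerProductSpace.toDual ℝ (EuclideanSpace ℝ (Fin K × Fin d)))
          (lcGrad K d J (a v) (b v) x)) x :=
      HasFDerivAt.fun_sum fun v _ => (hasGradientAt_localCost K d J (a v) (b v) x).hasFDerivAt
    have h2 := h1.const_smul ((Reg.card : ℝ)⁻¹)
    have hD : (InnerProductSpace.toDual ℝ (EuclideanSpace ℝ (Fin K × Fin d)))
        ((Reg.card : ℝ)⁻¹ • ∑ v ∈ Reg, lcGrad K d J (a v) (b v) x) =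
        (Reg.card : ℝ)⁻¹ • ∑ v ∈ Reg,
          (InnerProductSpace.toDual ℝ (EuclideanSpace ℝ (Fin K × Fin d)))
            (lcGrad K d J (a v) (b v) x) := by
      simp [map_sum, map_smulₛₗ]
    rw [hD]
    simpa [smul_eq_mul, Pi.smul_def] using h2
  have hgrad2 := hGf.gradient
  rw [hgrad1, hgrad2]
  set M := Finset.univ.sup' (⟨w, Finset.mem_univ w⟩ : (Finset.univ : Finset (Fin Wn)).Nonempty)
    (fun v => ‖(J : ℝ)⁻¹ • ∑ j : Fin J, a v j‖) with hM
  have hMv : ∀ v, ‖(J : ℝ)⁻¹ • ∑ j : Fin J, a v j‖ ≤ M := by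
    intro v
    rw [hM]
    exact Finset.le_sup' (fun v => ‖(J : ℝ)⁻¹ • ∑ j : Fin J, a v j‖) (Finset.mem_univ v)
  have hb : ∀ v (bb : Fin J → Fin K), ‖lcGrad K d J (a v) bb x‖ ≤ Real.sqrt K * M :=
    fun v bb => (norm_lcGrad_le K d J (a v) bb (ha v) x).trans
      (mul_le_mul_of_nonneg_left (hMv v) (Real.sqrt_nonneg _))
  have hcard : (Reg.card : ℝ) ≠ 0 := by
    exact_mod_cast (Finset.card_pos.mpr hReg).ne'
  have hB : ‖(Reg.card : ℝ)⁻¹ • ∑ v ∈ Reg, lcGrad K d J (a v) (b v) x‖ ≤ Real.sqrt K * M := by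
    rw [norm_smul, Real.norm_eq_abs, abs_of_nonneg (by positivity : (0:ℝ) ≤ (Reg.card : ℝ)⁻¹)]
    have h3 : ‖∑ v ∈ Reg, lcGrad K d J (a v) (b v) x‖ ≤ (Reg.card : ℝ) * (Real.sqrt K * M) := by
      refine (norm_sum_le _ _).trans ?_
      calc ∑ v ∈ Reg, ‖lcGrad K d J (a v) (b v) x‖ ≤ ∑ _v ∈ Reg, Real.sqrt K * M :=
          Finset.sum_le_sum fun v _ => hb v (b v)
        _ = (Reg.card : ℝ) * (Real.sqrt K * M) := by rw [Finset.sum_const, nsmul_eq_mul]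
    calc (Reg.card : ℝ)⁻¹ * ‖∑ v ∈ Reg, lcGrad K d J (a v) (b v) x‖ ≤
        (Reg.card : ℝ)⁻¹ * ((Reg.card : ℝ) * (Real.sqrt K * M)) :=
          mul_le_mul_of_nonneg_left h3 (by positivity)
      _ = Real.sqrt K * M := by rw [← mul_assoc, inv_mul_cancel₀ hcard, one_mul]
  calc ‖lcGrad K d J (a w) (bt w) x -
      (Reg.card : ℝ)⁻¹ • ∑ v ∈ Reg, lcGrad K d J (a v) (b v) x‖ ≤
      ‖lcGrad K d J (a w) (bt w) x‖ +
        ‖(Reg.card : ℝ)⁻¹ • ∑ v ∈ Reg, lcGrad K d J (a v) (b v) x‖ := norm_sub_le _ _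
    _ ≤ Real.sqrt K * M + Real.sqrt K * M := add_le_add (hb w (bt w)) hB
    _ = 2 * Real.sqrt K * M := by ring
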